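/- (Fractional differential inequality for the Burgers gradient functional.) Let 0 < α < 1, ν > 0, M > 0, L > 0, and let u ∈ C^{1,3}_{t,x}([0,T]×[0,L]) solve ∂^α_{+0,t}u + u u_x = ν u_{xx} on (0,L)×(0,T] with |u(x,t)| ≤ M on [0,L]×[0,T], and assume that for each fixed x ∈ [0,L] the function t ↦ u(x,t) is monotone on [0,T]. Let φ ∈ C³([0,L]) with φ(x) ≥ 0 on [0,L] and φ not identically zero, and set θ₁ := (M⁴/(4ν²))∫₀^L φ(x) dx + Mν∫₀^L |φ‴(x)| dx, θ₂ := ∫₀^L φ(x) dx, v(x,t) = −u_x(x,t) − u(x,t)²/(2ν), F(t) = ∫₀^L v(x,t)φ(x) dx, and Φ(t) = −ν[(u_{xx}φ − u_xφ′ + uφ″)(L,t) − (u_{xx}φ − u_xφ′ + uφ″)(0,t)]. Then for every t ∈ (0,T], ∂^α_{+0,t} F(t) ≥ θ₂^{−1} F(t)² + Φ(t) − θ₁. -/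

import Mathlib

open Set MeasureTheory Filter

/-- Caputo fractional derivative of order α at base point 0 (in one real variable). -/
noncomputable def caputo (α : ℝ) (f : ℝ → ℝ) (t : ℝ) : ℝ :=
  (1 / Real.Gamma (1 - α)) * ∫ s in (0:ℝ)..t, (t - s) ^ (-α) * deriv f s

/-- Partial derivative in the first (spatial) variable. -/
noncomputable def pdX (u : ℝ → ℝ → ℝ) : ℝ → ℝ → ℝ := fun x t => deriv (fun y => u y t) x

/-- Partial derivative in the second (time) variable. -/
noncomputable def pdT (u : ℝ → ℝ → ℝ) : ℝ → ℝ → ℝ := fun x t => deriv (fun s => u x s) t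

/-- Caputo fractional derivative in the time variable (x fixed). -/
noncomputable def capT (α : ℝ) (u : ℝ → ℝ → ℝ) (x t : ℝ) : ℝ := caputo α (fun s => u x s) t

/-- u belongs to C^{1,n}_{t,x}([0,T] x [0,L]): the spatial derivatives up to order n and
their first time derivatives exist and are continuous on the closed rectangle. -/
def CReg (n : ℕ) (u : ℝ → ℝ → ℝ) (L T : ℝ) : Prop :=
  (∀ k ≤ n, ContinuousOn (fun p : ℝ × ℝ => (pdX^[k] u) p.1 p.2) (Icc 0 L ×ˢ Icc 0 T)) ∧
  (∀ k ≤ n, ContinuousOn (fun p : ℝ × ℝ => pdT (pdX^[k] u) p.1 p.2) (Icc 0 L ×ˢ Icc 0 T)) ∧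
  (∀ k < n, ∀ x ∈ Icc (0:ℝ) L, ∀ t ∈ Icc (0:ℝ) T, DifferentiableAt ℝ (fun y => (pdX^[k] u) y t) x) ∧
  (∀ k ≤ n, ∀ x ∈ Icc (0:ℝ) L, ∀ t ∈ Icc (0:ℝ) T, DifferentiableAt ℝ (fun s => (pdX^[k] u) x s) t)

/-- φ belongs to C^n([0,L]). -/
def Csp (n : ℕ) (φ : ℝ → ℝ) (L : ℝ) : Prop :=
  (∀ k < n, ∀ x ∈ Icc (0:ℝ) L, DifferentiableAt ℝ (deriv^[k] φ) x) ∧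
  ContinuousOn (deriv^[n] φ) (Icc 0 L)


section helpers
open Topology

lemma kint {α : ℝ} (t : ℝ) (h1 : α < 1) :
    IntervalIntegrable (fun s => (t - s) ^ (-α)) volume 0 t := by
  have h := (intervalIntegral.intervalIntegrable_rpow' (a := 0) (b := t)
    (r := -α) (by linarith)).comp_sub_left t
  simpa using h.symm

lemma sliceX {f : ℝ → ℝ → ℝ} {L T : ℝ}
    (hf : ContinuousOn (fun p : ℝ × ℝ => f p.1 p.2) (Icc 0 L ×ˢ Icc 0 T)) {s : ℝ}
    (hs : s ∈ Icc (0:ℝ) T) : ContinuousOn (fun x => f x s) (Icc 0 L) := by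
  have : (fun x => f x s) = (fun p : ℝ × ℝ => f p.1 p.2) ∘ (fun x => (x, s)) := rfl
  rw [this]
  exact hf.comp ((continuous_id.prodMk continuous_const).continuousOn)
    (fun y hy => ⟨hy, hs⟩)

lemma sliceT {f : ℝ → ℝ → ℝ} {L T : ℝ}
    (hf : ContinuousOn (fun p : ℝ × ℝ => f p.1 p.2) (Icc 0 L ×ˢ Icc 0 T)) {x : ℝ}
    (hx : x ∈ Icc (0:ℝ) L) : ContinuousOn (fun s => f x s) (Icc 0 T) := by
  have : (fun s => f x s) = (fun p : ℝ × ℝ => f p.1 p.2) ∘ (fun s => (x, s)) := rfl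
  rw [this]
  exact hf.comp ((continuous_const.prodMk continuous_id).continuousOn)
    (fun y hy => ⟨hx, hy⟩)

lemma rect_bound {f : ℝ → ℝ → ℝ} {L T : ℝ}
    (hf : ContinuousOn (fun p : ℝ × ℝ => f p.1 p.2) (Icc 0 L ×ˢ Icc 0 T)) :
    ∃ C : ℝ, 0 ≤ C ∧ ∀ x ∈ Icc (0:ℝ) L, ∀ s ∈ Icc (0:ℝ) T, |f x s| ≤ C := by
  obtain ⟨C, hC⟩ := (isCompact_Icc.prod isCompact_Icc).exists_bound_of_continuousOn hf
  exact ⟨max C 0, le_max_right _ _, fun x hx s hs =>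
    le_trans (by simpa using hC (x, s) ⟨hx, hs⟩) (le_max_left _ _)⟩

lemma finite_restrict_Ioc (a b : ℝ) : IsFiniteMeasure (volume.restrict (Ioc a b)) := by
  constructor
  rw [Measure.restrict_apply_univ]
  exact lt_of_le_of_lt (le_of_eq (Real.volume_Ioc)) ENNReal.ofReal_lt_top

lemma fubini_helper {b d B D : ℝ} (hb : 0 ≤ b) (hd : 0 ≤ d) (hbB : b ≤ B) (hdD : d ≤ D)
    {K : ℝ → ℝ} (hK : IntervalIntegrable K volume 0 b)
    {g : ℝ → ℝ → ℝ} (hg : ContinuousOn (fun p : ℝ × ℝ => g p.1 p.2) (Icc 0 B ×ˢ Icc 0 D)) :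
    (∫ s in (0:ℝ)..b, ∫ x in (0:ℝ)..d, K s * g s x) =
      (∫ x in (0:ℝ)..d, ∫ s in (0:ℝ)..b, K s * g s x) ∧
    IntervalIntegrable (fun x => ∫ s in (0:ℝ)..b, K s * g s x) volume 0 d := by
  set μ := volume.restrict (Ioc (0:ℝ) b) with hμ
  set ν := volume.restrict (Ioc (0:ℝ) d) with hν
  haveI : IsFiniteMeasure μ := finite_restrict_Ioc 0 b
  haveI : IsFiniteMeasure ν := finite_restrict_Ioc 0 d
  obtain ⟨C, hC0, hC⟩ : ∃ C : ℝ, 0 ≤ C ∧ ∀ p ∈ (Icc (0:ℝ) B ×ˢ Icc (0:ℝ) D), |g p.1 p.2| ≤ C := by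
    obtain ⟨C, hC⟩ := (isCompact_Icc.prod isCompact_Icc).exists_bound_of_continuousOn hg
    exact ⟨max C 0, le_max_right _ _, fun p hp => le_trans (hC p hp) (le_max_left _ _)⟩
  have hKi : IntegrableOn K (Ioc 0 b) volume := by
    simpa [intervalIntegrable_iff, uIoc_of_le hb] using hK
  have hsub : (Ioc (0:ℝ) b ×ˢ Ioc (0:ℝ) d) ⊆ (Icc (0:ℝ) B ×ˢ Icc (0:ℝ) D) :=
    prod_mono (Ioc_subset_Icc_self.trans (Icc_subset_Icc_right hbB))
      (Ioc_subset_Icc_self.trans (Icc_subset_Icc_right hdD))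
  have hae : ∀ᵐ p ∂(μ.prod ν), p ∈ Ioc (0:ℝ) b ×ˢ Ioc (0:ℝ) d := by
    rw [hμ, hν, Measure.prod_restrict]
    exact ae_restrict_mem (measurableSet_Ioc.prod measurableSet_Ioc)
  have hgm : AEStronglyMeasurable (fun p : ℝ × ℝ => g p.1 p.2) (μ.prod ν) := by
    rw [hμ, hν, Measure.prod_restrict]
    exact (hg.mono hsub).aestronglyMeasurable (measurableSet_Ioc.prod measurableSet_Ioc)
  have hKm : AEStronglyMeasurable (fun p : ℝ × ℝ => K p.1) (μ.prod ν) :=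
    hKi.aestronglyMeasurable.comp_fst
  have hbd : Integrable (fun p : ℝ × ℝ => |K p.1| * C) (μ.prod ν) := by
    have := (hKi.norm.mul_const C).mul_prod (integrable_const (μ := ν) (1:ℝ))
    simpa [Real.norm_eq_abs] using this
  have hint : Integrable (fun p : ℝ × ℝ => K p.1 * g p.1 p.2) (μ.prod ν) := by
    refine Integrable.mono' hbd (hKm.mul hgm) ?_
    refine hae.mono fun p hp => ?_
    calc ‖K p.1 * g p.1 p.2‖ = |K p.1| * |g p.1 p.2| := abs_mul _ _
      _ ≤ |K p.1| * C := mul_le_mul_of_nonneg_left (hC p (hsub hp)) (abs_nonneg _)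
  constructor
  · have swap := MeasureTheory.integral_integral_swap (μ := μ) (ν := ν)
      (f := fun s x => K s * g s x) hint
    simpa [intervalIntegral.integral_of_le hb, intervalIntegral.integral_of_le hd] using swap
  · have hmarg : Integrable (fun x => ∫ s, K s * g s x ∂μ) ν := hint.integral_prod_right
    rw [intervalIntegrable_iff, uIoc_of_le hd]
    refine (integrable_congr ?_).mp hmarg
    refine Eventually.of_forall fun x => ?_
    simp only [intervalIntegral.integral_of_le hb]
    rfl

lemma deriv_nonneg_of_monotoneOn {g : ℝ → ℝ} {T s d : ℝ} (hs : s ∈ Ioo 0 T)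
    (hm : MonotoneOn g (Icc 0 T)) (hd : HasDerivAt g d s) : 0 ≤ d := by
  have htend : Tendsto (slope g s) (𝓝[>] s) (𝓝 d) :=
    (hasDerivAt_iff_tendsto_slope.mp hd).mono_left
      (nhdsWithin_mono s fun y hy => ne_of_gt hy)
  refine ge_of_tendsto htend ?_
  filter_upwards [Ioo_mem_nhdsGT_of_mem ⟨le_refl s, hs.2⟩] with y hy
  have h1 : s ∈ Icc (0:ℝ) T := ⟨hs.1.le, hs.2.le⟩
  have h2 : y ∈ Icc (0:ℝ) T := ⟨(hs.1.trans hy.1).le, hy.2.le⟩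
  rw [slope_def_field]
  have : g s ≤ g y := hm h1 h2 hy.1.le
  have hys : 0 < y - s := sub_pos.mpr hy.1
  exact div_nonneg (by linarith) hys.le

lemma deriv_nonpos_of_antitoneOn {g : ℝ → ℝ} {T s d : ℝ} (hs : s ∈ Ioo 0 T)
    (hm : AntitoneOn g (Icc 0 T)) (hd : HasDerivAt g d s) : d ≤ 0 := by
  have := deriv_nonneg_of_monotoneOn (g := fun y => -g y) hs
    (fun a ha b hb hab => neg_le_neg (hm ha hb hab)) hd.neg
  linarith

lemma ae_Icc_mem_Ioo {a b : ℝ} :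
    ∀ᵐ s ∂(volume.restrict (Icc a b)), s ∈ Ioo a b := by
  have h : ∀ᵐ s ∂(volume : Measure ℝ), s ∉ ({a, b} : Set ℝ) :=
    ((Set.countable_singleton _).insert _).ae_notMem _
  filter_upwards [ae_restrict_mem measurableSet_Icc, ae_restrict_of_ae h] with s hs hs'
  rcases eq_or_lt_of_le hs.1 with h1 | h1
  · exact absurd (by simp [← h1]) hs'
  rcases eq_or_lt_of_le hs.2 with h2 | h2
  · exact absurd (by simp [h2]) hs'
  exact ⟨h1, h2⟩

end helpers

open Topology in
set_option maxHeartbeats 1000000 in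
/-- Fractional differential inequality for the Burgers gradient functional. -/
theorem fractional_burgers_gradient_inequality
    (α ν M L T : ℝ) (hα : 0 < α ∧ α < 1) (hν : 0 < ν) (hM : 0 < M) (hL : 0 < L) (hT : 0 < T)
    (u : ℝ → ℝ → ℝ) (φ : ℝ → ℝ) (θ₁ θ₂ : ℝ) (v : ℝ → ℝ → ℝ) (F Φ : ℝ → ℝ)
    (hreg : CReg 3 u L T)
    (hpde : ∀ x ∈ Ioo (0:ℝ) L, ∀ t ∈ Ioc (0:ℝ) T,
      capT α u x t + u x t * pdX u x t = ν * pdX (pdX u) x t)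
    (hbound : ∀ x ∈ Icc (0:ℝ) L, ∀ t ∈ Icc (0:ℝ) T, |u x t| ≤ M)
    (hmono : ∀ x ∈ Icc (0:ℝ) L,
      MonotoneOn (fun s => u x s) (Icc 0 T) ∨ AntitoneOn (fun s => u x s) (Icc 0 T))
    (hφ : Csp 3 φ L)
    (hφ0 : ∀ x ∈ Icc (0:ℝ) L, 0 ≤ φ x)
    (hφne : ∃ x ∈ Icc (0:ℝ) L, φ x ≠ 0)
    (hθ₁ : θ₁ = (M ^ 4 / (4 * ν ^ 2)) * (∫ x in (0:ℝ)..L, φ x)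
      + M * ν * ∫ x in (0:ℝ)..L, |deriv (deriv (deriv φ)) x|)
    (hθ₂ : θ₂ = ∫ x in (0:ℝ)..L, φ x)
    (hv : ∀ x t, v x t = -pdX u x t - (u x t) ^ 2 / (2 * ν))
    (hF : ∀ t, F t = ∫ x in (0:ℝ)..L, v x t * φ x)
    (hΦ : ∀ t, Φ t = -ν * ((pdX (pdX u) L t * φ L - pdX u L t * deriv φ L + u L t * deriv (deriv φ) L)
      - (pdX (pdX u) 0 t * φ 0 - pdX u 0 t * deriv φ 0 + u 0 t * deriv (deriv φ) 0))) :
    ∀ t ∈ Ioc (0:ℝ) T, θ₂⁻¹ * (F t) ^ 2 + Φ t - θ₁ ≤ caputo α F t := by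
  obtain ⟨hα0, hα1⟩ := hα
  obtain ⟨hcu, hct, hdx, hdt⟩ := hreg
  obtain ⟨hφd, hφc3⟩ := hφ
  intro t ht
  obtain ⟨ht0, htT⟩ := ht
  have htIcc : t ∈ Icc (0:ℝ) T := ⟨ht0.le, htT⟩
  have hΓ : 0 < Real.Gamma (1 - α) := Real.Gamma_pos_of_pos (by linarith)
  set Γ := Real.Gamma (1 - α) with hΓdef
  set K : ℝ → ℝ := fun s => (t - s) ^ (-α) with hKdef
  have hKint : IntervalIntegrable K volume 0 t := kint t hα1
  have hKnn : ∀ s, s ≤ t → 0 ≤ K s := fun s hs => Real.rpow_nonneg (by linarith) _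
  -- spatial derivatives
  set u1 : ℝ → ℝ → ℝ := pdX u with hu1
  set u2 : ℝ → ℝ → ℝ := pdX u1 with hu2
  set u3 : ℝ → ℝ → ℝ := pdX u2 with hu3
  have e0 : pdX^[0] u = u := rfl
  have e1 : pdX^[1] u = u1 := rfl
  have e2 : pdX^[2] u = u2 := by
    rw [show (2:ℕ) = 1 + 1 from rfl, Function.iterate_succ_apply', e1]
  have e3 : pdX^[3] u = u3 := by
    rw [show (3:ℕ) = 2 + 1 from rfl, Function.iterate_succ_apply', e2]
  -- continuity of spatial derivatives on the rectangle
  have hcu0 := hcu 0 (by norm_num); rw [e0] at hcu0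
  have hcu1 := hcu 1 (by norm_num); rw [e1] at hcu1
  have hcu2 := hcu 2 (by norm_num); rw [e2] at hcu2
  have hcu3 := hcu 3 (by norm_num); rw [e3] at hcu3
  have hct0 := hct 0 (by norm_num); rw [e0] at hct0
  have hct1 := hct 1 (by norm_num); rw [e1] at hct1
  have hct2 := hct 2 (by norm_num); rw [e2] at hct2
  have hct3 := hct 3 (by norm_num); rw [e3] at hct3
  -- derivatives as HasDerivAt
  have hdx0 : ∀ x ∈ Icc (0:ℝ) L, ∀ s ∈ Icc (0:ℝ) T,
      HasDerivAt (fun y => u y s) (u1 x s) x := fun x hx s hs => by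
    have h := hdx 0 (by norm_num) x hx s hs; rw [e0] at h; exact h.hasDerivAt
  have hdx1 : ∀ x ∈ Icc (0:ℝ) L, ∀ s ∈ Icc (0:ℝ) T,
      HasDerivAt (fun y => u1 y s) (u2 x s) x := fun x hx s hs => by
    have h := hdx 1 (by norm_num) x hx s hs; rw [e1] at h; exact h.hasDerivAt
  have hdx2 : ∀ x ∈ Icc (0:ℝ) L, ∀ s ∈ Icc (0:ℝ) T,
      HasDerivAt (fun y => u2 y s) (u3 x s) x := fun x hx s hs => by
    have h := hdx 2 (by norm_num) x hx s hs; rw [e2] at h; exact h.hasDerivAt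
  have hdt0 : ∀ x ∈ Icc (0:ℝ) L, ∀ s ∈ Icc (0:ℝ) T,
      HasDerivAt (fun σ => u x σ) (pdT u x s) s := fun x hx s hs => by
    have h := hdt 0 (by norm_num) x hx s hs; rw [e0] at h; exact h.hasDerivAt
  have hdt1 : ∀ x ∈ Icc (0:ℝ) L, ∀ s ∈ Icc (0:ℝ) T,
      HasDerivAt (fun σ => u1 x σ) (pdT u1 x s) s := fun x hx s hs => by
    have h := hdt 1 (by norm_num) x hx s hs; rw [e1] at h; exact h.hasDerivAt
  -- φ data
  set ψ1 : ℝ → ℝ := deriv φ with hψ1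
  set ψ2 : ℝ → ℝ := deriv ψ1 with hψ2
  set ψ3 : ℝ → ℝ := deriv ψ2 with hψ3
  have hφd0 : ∀ x ∈ Icc (0:ℝ) L, HasDerivAt φ (ψ1 x) x := fun x hx =>
    (hφd 0 (by norm_num) x hx).hasDerivAt
  have hφd1 : ∀ x ∈ Icc (0:ℝ) L, HasDerivAt ψ1 (ψ2 x) x := fun x hx => by
    have h := hφd 1 (by norm_num) x hx
    rw [show deriv^[1] φ = ψ1 from rfl] at h; exact h.hasDerivAt
  have hφd2 : ∀ x ∈ Icc (0:ℝ) L, HasDerivAt ψ2 (ψ3 x) x := fun x hx => by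
    have h := hφd 2 (by norm_num) x hx
    rw [show deriv^[2] φ = ψ2 by
      rw [show (2:ℕ) = 1 + 1 from rfl, Function.iterate_succ_apply']; rfl] at h
    exact h.hasDerivAt
  have hψ3c : ContinuousOn ψ3 (Icc 0 L) := by
    have : deriv^[3] φ = ψ3 := by
      rw [show (3:ℕ) = 2 + 1 from rfl, Function.iterate_succ_apply',
        show (2:ℕ) = 1 + 1 from rfl, Function.iterate_succ_apply']; rfl
    rw [← this]; exact hφc3
  have hφcont : ContinuousOn φ (Icc 0 L) := fun x hx =>
    ((hφd0 x hx).differentiableAt.continuousAt).continuousWithinAt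
  have hψ1cont : ContinuousOn ψ1 (Icc 0 L) := fun x hx =>
    ((hφd1 x hx).differentiableAt.continuousAt).continuousWithinAt
  have hψ2cont : ContinuousOn ψ2 (Icc 0 L) := fun x hx =>
    ((hφd2 x hx).differentiableAt.continuousAt).continuousWithinAt
  -- θ₂ positive
  have hθ₂pos : 0 < θ₂ := by
    rw [hθ₂]
    obtain ⟨x₀, hx₀, hx₀ne⟩ := hφne
    exact intervalIntegral.integral_pos hL hφcont (fun x hx => hφ0 x (Ioc_subset_Icc_self hx))
      ⟨x₀, hx₀, lt_of_le_of_ne (hφ0 x₀ hx₀) (Ne.symm hx₀ne)⟩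

  -- slice continuity of pdT u1 in each variable
  have hwX : ∀ s ∈ Icc (0:ℝ) T, ContinuousOn (fun z => pdT u1 z s) (Icc 0 L) :=
    fun s hs => sliceX hct1 hs
  have hwT : ∀ z ∈ Icc (0:ℝ) L, ContinuousOn (fun σ => pdT u1 z σ) (Icc 0 T) :=
    fun z hz => sliceT hct1 hz
  obtain ⟨Cw, hCw0, hCw⟩ := rect_bound hct1
  -- Step A : Schwarz lemma, mixed partial derivatives
  have key : ∀ s ∈ Ioo (0:ℝ) T, ∀ y ∈ Icc (0:ℝ) L,
      pdT u y s = pdT u 0 s + ∫ z in (0:ℝ)..y, pdT u1 z s := by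
    intro s hs y hy
    have hsIcc : s ∈ Icc (0:ℝ) T := ⟨hs.1.le, hs.2.le⟩
    have h0L : (0:ℝ) ∈ Icc (0:ℝ) L := ⟨le_refl 0, hL.le⟩
    -- FTC in time for u1
    have ftc_t : ∀ z ∈ Icc (0:ℝ) L, ∀ τ ∈ Icc (0:ℝ) T,
        u1 z τ - u1 z 0 = ∫ σ in (0:ℝ)..τ, pdT u1 z σ := by
      intro z hz τ hτ
      refine (intervalIntegral.integral_eq_sub_of_hasDerivAt (fun σ hσ => ?_) ?_).symm
      · have hσ' : σ ∈ Icc (0:ℝ) T := by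
          rw [uIcc_of_le hτ.1] at hσ; exact ⟨hσ.1, hσ.2.trans hτ.2⟩
        exact hdt1 z hz σ hσ'
      · exact ((hwT z hz).mono (by
          rw [uIcc_of_le hτ.1]; exact Icc_subset_Icc_right hτ.2)).intervalIntegrable
    -- FTC in space for u
    have ftc_x : ∀ τ ∈ Icc (0:ℝ) T,
        u y τ - u 0 τ = ∫ z in (0:ℝ)..y, u1 z τ := by
      intro τ hτ
      refine (intervalIntegral.integral_eq_sub_of_hasDerivAt
        (f := fun z => u z τ) (fun z hz => ?_) ?_).symm
      · have hz' : z ∈ Icc (0:ℝ) L := by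
          rw [uIcc_of_le hy.1] at hz; exact ⟨hz.1, hz.2.trans hy.2⟩
        exact hdx0 z hz' τ hτ
      · exact ((sliceX hcu1 hτ).mono (by
          rw [uIcc_of_le hy.1]; exact Icc_subset_Icc_right hy.2)).intervalIntegrable
    -- the function W
    set W : ℝ → ℝ := fun σ => ∫ z in (0:ℝ)..y, pdT u1 z σ with hWdef
    -- representation of u y τ
    have hrep : ∀ τ ∈ Icc (0:ℝ) T,
        u y τ = (u 0 τ + ∫ z in (0:ℝ)..y, u1 z 0) + ∫ σ in (0:ℝ)..τ, W σ := by
      intro τ hτ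
      have hsplit : (∫ z in (0:ℝ)..y, u1 z τ) =
          (∫ z in (0:ℝ)..y, u1 z 0) + ∫ z in (0:ℝ)..y, ∫ σ in (0:ℝ)..τ, pdT u1 z σ := by
        have h1 : IntervalIntegrable (fun z => u1 z 0) volume 0 y :=
          ((sliceX hcu1 ⟨le_refl 0, hT.le⟩).mono (by
            rw [uIcc_of_le hy.1]; exact Icc_subset_Icc_right hy.2)).intervalIntegrable
        have h2 : IntervalIntegrable (fun z => u1 z τ) volume 0 y :=
          ((sliceX hcu1 hτ).mono (by
            rw [uIcc_of_le hy.1]; exact Icc_subset_Icc_right hy.2)).intervalIntegrable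
        have h3 : (∫ z in (0:ℝ)..y, ∫ σ in (0:ℝ)..τ, pdT u1 z σ) =
            ∫ z in (0:ℝ)..y, (u1 z τ - u1 z 0) := by
          refine intervalIntegral.integral_congr fun z hz => ?_
          have hz' : z ∈ Icc (0:ℝ) L := by
            rw [uIcc_of_le hy.1] at hz; exact ⟨hz.1, hz.2.trans hy.2⟩
          exact (ftc_t z hz' τ hτ).symm
        rw [h3, intervalIntegral.integral_sub h2 h1]; ring
      have hfx := ftc_x τ hτ
      have hW : (∫ σ in (0:ℝ)..τ, W σ) =
          ∫ z in (0:ℝ)..y, ∫ σ in (0:ℝ)..τ, pdT u1 z σ := by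
        rw [hWdef]
        calc (∫ σ in (0:ℝ)..τ, ∫ z in (0:ℝ)..y, pdT u1 z σ)
            = ∫ σ in (0:ℝ)..τ, ∫ z in (0:ℝ)..y, (fun _ => (1:ℝ)) z * pdT u1 z σ := by
              simp
          _ = ∫ z in (0:ℝ)..y, ∫ σ in (0:ℝ)..τ, (fun _ => (1:ℝ)) z * pdT u1 z σ := by
              have := (fubini_helper hτ.1 hy.1 hτ.2 hy.2
                (K := fun _ => (1:ℝ)) intervalIntegrable_const
                (g := fun σ z => pdT u1 z σ) ?_).1
              · exact this
              · exact hct1.comp (continuous_swap.continuousOn)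
                  (fun p hp => ⟨hp.2, hp.1⟩)
          _ = ∫ z in (0:ℝ)..y, ∫ σ in (0:ℝ)..τ, pdT u1 z σ := by simp
      rw [hW]
      linarith [hfx, hsplit]
    -- continuity of W on Ioo 0 T
    have hWcont : ∀ σ₀ ∈ Ioo (0:ℝ) T, ContinuousAt W σ₀ := by
      intro σ₀ hσ₀
      refine intervalIntegral.continuousAt_of_dominated_interval ?_ ?_
        (intervalIntegrable_const (c := Cw)) ?_
      · filter_upwards [Ioo_mem_nhds hσ₀.1 hσ₀.2] with σ hσ
        exact ((hwX σ ⟨hσ.1.le, hσ.2.le⟩).mono (by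
          rw [uIoc_of_le hy.1]; exact Ioc_subset_Icc_self.trans
            (Icc_subset_Icc_right hy.2))).aestronglyMeasurable measurableSet_uIoc
      · filter_upwards [Ioo_mem_nhds hσ₀.1 hσ₀.2] with σ hσ
        refine Eventually.of_forall fun z hz => ?_
        have hz' : z ∈ Icc (0:ℝ) L := by
          rw [uIoc_of_le hy.1] at hz
          exact ⟨hz.1.le, hz.2.trans hy.2⟩
        simpa [Real.norm_eq_abs] using hCw z hz' σ ⟨hσ.1.le, hσ.2.le⟩
      · refine Eventually.of_forall fun z hz => ?_
        have hz' : z ∈ Icc (0:ℝ) L := by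
          rw [uIoc_of_le hy.1] at hz
          exact ⟨hz.1.le, hz.2.trans hy.2⟩
        exact (hwT z hz').continuousAt (Icc_mem_nhds hσ₀.1 hσ₀.2)
    have hWint : IntervalIntegrable W volume 0 T := by
      have := (fubini_helper hy.1 hT.le hy.2 (le_refl T)
        (K := fun _ => (1:ℝ)) intervalIntegrable_const
        (g := fun z σ => pdT u1 z σ) hct1).2
      rw [hWdef]
      simpa using this
    -- derivative of the representation at s
    have hd_rhs : HasDerivAt
        (fun τ => (u 0 τ + ∫ z in (0:ℝ)..y, u1 z 0) + ∫ σ in (0:ℝ)..τ, W σ)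
        (pdT u 0 s + W s) s := by
      have h1 : HasDerivAt (fun τ => u 0 τ + ∫ z in (0:ℝ)..y, u1 z 0) (pdT u 0 s) s :=
        (hdt0 0 h0L s hsIcc).add_const _
      have h2 : HasDerivAt (fun τ => ∫ σ in (0:ℝ)..τ, W σ) (W s) s := by
        refine intervalIntegral.integral_hasDerivAt_right (hWint.mono_set ?_) ?_ (hWcont s hs)
        · rw [uIcc_of_le hs.1.le, uIcc_of_le hT.le]
          exact Icc_subset_Icc_right hs.2.le
        · exact ContinuousOn.stronglyMeasurableAtFilter isOpen_Ioo
            (fun σ hσ => (hWcont σ hσ).continuousWithinAt) s hs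
      exact h1.add h2
    have heq : (fun τ => u y τ) =ᶠ[𝓝 s]
        (fun τ => (u 0 τ + ∫ z in (0:ℝ)..y, u1 z 0) + ∫ σ in (0:ℝ)..τ, W σ) := by
      filter_upwards [Icc_mem_nhds hs.1 hs.2] with τ hτ using hrep τ hτ
    have hDa : HasDerivAt (fun τ => u y τ) (pdT u 0 s + W s) s :=
      hd_rhs.congr_of_eventuallyEq heq
    exact (hdt0 y hy s hsIcc).unique hDa
  have hschwarz : ∀ x ∈ Ioo (0:ℝ) L, ∀ s ∈ Ioo (0:ℝ) T,
      HasDerivAt (fun y => pdT u y s) (pdT u1 x s) x := by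
    intro x hx s hs
    have hsIcc : s ∈ Icc (0:ℝ) T := ⟨hs.1.le, hs.2.le⟩
    have h2 : HasDerivAt (fun y => pdT u 0 s + ∫ z in (0:ℝ)..y, pdT u1 z s)
        (pdT u1 x s) x := by
      refine HasDerivAt.const_add _ (intervalIntegral.integral_hasDerivAt_right ?_ ?_ ?_)
      · exact ((hwX s hsIcc).mono (by
          rw [uIcc_of_le hx.1.le]; exact Icc_subset_Icc_right hx.2.le)).intervalIntegrable
      · exact ContinuousOn.stronglyMeasurableAtFilter isOpen_Ioo
          ((hwX s hsIcc).mono Ioo_subset_Icc_self) x hx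
      · exact (hwX s hsIcc).continuousAt (Icc_mem_nhds hx.1 hx.2)
    refine h2.congr_of_eventuallyEq ?_
    filter_upwards [Icc_mem_nhds hx.1 hx.2] with y hy using key s hs y hy

  -- basic kernel facts
  have hKaesm : AEStronglyMeasurable K (volume.restrict (uIoc 0 t)) := by
    rw [uIoc_of_le ht0.le]; exact hKint.1.aestronglyMeasurable
  have hKslice : ∀ (g : ℝ → ℝ), ContinuousOn g (Icc 0 T) →
      AEStronglyMeasurable (fun s => K s * g s) (volume.restrict (uIoc 0 t)) := by
    intro g hg
    refine hKaesm.mul ?_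
    rw [uIoc_of_le ht0.le]
    exact (hg.mono (Ioc_subset_Icc_self.trans (Icc_subset_Icc_right htT))).aestronglyMeasurable
      measurableSet_Ioc
  have hKii : ∀ (g : ℝ → ℝ), ContinuousOn g (Icc 0 T) →
      IntervalIntegrable (fun s => K s * g s) volume 0 t := fun g hg =>
    hKint.mul_continuousOn (hg.mono (by
      rw [uIcc_of_le ht0.le]; exact Icc_subset_Icc_right htT))
  have htne : ∀ᵐ s ∂(volume : Measure ℝ), s ≠ t := by
    have := (Set.countable_singleton t).ae_notMem (volume : Measure ℝ)
    filter_upwards [this] with s hs using by simpa using hs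
  have hpde' : ∀ y ∈ Ioo (0:ℝ) L, capT α u y t = ν * u2 y t - u y t * u1 y t := by
    intro y hy
    have := hpde y hy t ⟨ht0, htT⟩
    linarith
  -- Step B : spatial derivative of the Caputo derivative
  have hB : ∀ x ∈ Ioo (0:ℝ) L,
      (1/Γ) * (∫ s in (0:ℝ)..t, K s * pdT u1 x s) =
        ν * u3 x t - ((u1 x t)^2 + u x t * u2 x t) := by
    intro x hx
    have hxIcc : x ∈ Icc (0:ℝ) L := ⟨hx.1.le, hx.2.le⟩
    obtain ⟨ε, hε0, hεsub⟩ : ∃ ε > 0, Metric.ball x ε ⊆ Ioo 0 L :=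
      Metric.isOpen_iff.mp isOpen_Ioo x hx
    have hd1 : HasDerivAt (fun y => ∫ s in (0:ℝ)..t, K s * pdT u y s)
        (∫ s in (0:ℝ)..t, K s * pdT u1 x s) x := by
      refine (intervalIntegral.hasDerivAt_integral_of_dominated_loc_of_deriv_le (Metric.ball_mem_nhds x hε0)
        (F := fun y s => K s * pdT u y s) (F' := fun y s => K s * pdT u1 y s)
        (bound := fun s => Cw * K s) ?_ ?_ ?_ ?_ ?_ ?_).2
      · filter_upwards [isOpen_Ioo.mem_nhds hx] with y hy
        exact hKslice _ (sliceT hct0 ⟨hy.1.le, hy.2.le⟩)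
      · exact hKii _ (sliceT hct0 hxIcc)
      · exact hKslice _ (sliceT hct1 hxIcc)
      · refine Eventually.of_forall fun s hs => fun y hy => ?_
        rw [uIoc_of_le ht0.le] at hs
        have hy' := hεsub hy
        have hsT : s ∈ Icc (0:ℝ) T := ⟨hs.1.le, hs.2.trans htT⟩
        rw [Real.norm_eq_abs, abs_mul, abs_of_nonneg (hKnn s hs.2)]
        calc K s * |pdT u1 y s| ≤ K s * Cw :=
              mul_le_mul_of_nonneg_left (hCw y ⟨hy'.1.le, hy'.2.le⟩ s hsT) (hKnn s hs.2)
          _ = Cw * K s := mul_comm _ _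
      · exact hKint.const_mul Cw
      · filter_upwards [htne] with s hst
        intro hs y hy
        rw [uIoc_of_le ht0.le] at hs
        have hsOoo : s ∈ Ioo (0:ℝ) T := ⟨hs.1, lt_of_lt_of_le (lt_of_le_of_ne hs.2 hst) htT⟩
        exact (hschwarz y (hεsub hy) s hsOoo).const_mul (K s)
    have hd2 : HasDerivAt (fun y => capT α u y t)
        ((1/Γ) * ∫ s in (0:ℝ)..t, K s * pdT u1 x s) x := by
      have hfun : (fun y => capT α u y t) =
          fun y => (1/Γ) * ∫ s in (0:ℝ)..t, K s * pdT u y s := rfl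
      rw [hfun]
      exact hd1.const_mul _
    have hd3 : HasDerivAt (fun y => ν * u2 y t - u y t * u1 y t)
        (ν * u3 x t - ((u1 x t)^2 + u x t * u2 x t)) x := by
      have h1 := (hdx2 x hxIcc t htIcc).const_mul ν
      have h2 := (hdx0 x hxIcc t htIcc).mul (hdx1 x hxIcc t htIcc)
      have := h1.sub h2
      refine this.congr_deriv ?_
      ring
    have hd4 : HasDerivAt (fun y => capT α u y t)
        (ν * u3 x t - ((u1 x t)^2 + u x t * u2 x t)) x := by
      refine hd3.congr_of_eventuallyEq ?_
      filter_upwards [isOpen_Ioo.mem_nhds hx] with y hy using hpde' y hy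
    exact hd2.unique hd4
  -- Step C : Caputo product inequality from monotonicity
  have hC : ∀ x ∈ Icc (0:ℝ) L,
      (∫ s in (0:ℝ)..t, K s * (u x s * pdT u x s)) ≤
        u x t * ∫ s in (0:ℝ)..t, K s * pdT u x s := by
    intro x hx
    have hint1 : IntervalIntegrable (fun s => K s * pdT u x s) volume 0 t :=
      hKii _ (sliceT hct0 hx)
    have hint2 : IntervalIntegrable (fun s => K s * (u x s * pdT u x s)) volume 0 t :=
      hKii _ ((sliceT hcu0 hx).mul (sliceT hct0 hx))
    have hdiff : u x t * (∫ s in (0:ℝ)..t, K s * pdT u x s)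
        - (∫ s in (0:ℝ)..t, K s * (u x s * pdT u x s))
        = ∫ s in (0:ℝ)..t, (K s * (pdT u x s * (u x t - u x s))) := by
      rw [← intervalIntegral.integral_const_mul,
        ← intervalIntegral.integral_sub (hint1.const_mul _) hint2]
      exact intervalIntegral.integral_congr fun s _ => by ring
    have hnn : 0 ≤ ∫ s in (0:ℝ)..t, (K s * (pdT u x s * (u x t - u x s))) := by
      refine intervalIntegral.integral_nonneg_of_ae_restrict ht0.le ?_
      filter_upwards [ae_Icc_mem_Ioo] with s hs
      have hsT : s ∈ Ioo (0:ℝ) T := ⟨hs.1, hs.2.trans_le htT⟩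
      have hsIcc : s ∈ Icc (0:ℝ) T := ⟨hsT.1.le, hsT.2.le⟩
      refine mul_nonneg (hKnn s hs.2.le) ?_
      rcases hmono x hx with hm | hm
      · exact mul_nonneg (deriv_nonneg_of_monotoneOn hsT hm (hdt0 x hx s hsIcc))
          (sub_nonneg.mpr (hm hsIcc htIcc hs.2.le))
      · have h1 := deriv_nonpos_of_antitoneOn hsT hm (hdt0 x hx s hsIcc)
        have h2 := sub_nonpos.mpr (hm hsIcc htIcc hs.2.le)
        nlinarith
    linarith

  -- Step D : derivative of F
  set vt : ℝ → ℝ → ℝ := fun x s => -(pdT u1 x s) - u x s * pdT u x s / ν with hvtdef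
  have hvtc : ContinuousOn (fun p : ℝ × ℝ => vt p.1 p.2) (Icc 0 L ×ˢ Icc 0 T) :=
    (hct1.neg).sub ((hcu0.mul hct0).div_const ν)
  obtain ⟨Cvt, hCvt0, hCvt⟩ := rect_bound hvtc
  obtain ⟨Cφ, hCφ0, hCφ⟩ : ∃ C : ℝ, 0 ≤ C ∧ ∀ x ∈ Icc (0:ℝ) L, |φ x| ≤ C := by
    obtain ⟨C, hC⟩ := isCompact_Icc.exists_bound_of_continuousOn hφcont
    exact ⟨max C 0, le_max_right _ _, fun x hx =>
      le_trans (by simpa using hC x hx) (le_max_left _ _)⟩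
  have hvcont : ∀ τ ∈ Icc (0:ℝ) T, ContinuousOn (fun x => v x τ) (Icc 0 L) := by
    intro τ hτ
    have hfun : (fun x => v x τ) = fun x => -u1 x τ - (u x τ)^2 / (2*ν) :=
      funext fun x => hv x τ
    rw [hfun]
    exact ((sliceX hcu1 hτ).neg).sub (((sliceX hcu0 hτ).pow 2).div_const _)
  have hvtd : ∀ x ∈ Icc (0:ℝ) L, ∀ τ ∈ Icc (0:ℝ) T,
      HasDerivAt (fun τ => v x τ) (vt x τ) τ := by
    intro x hx τ hτ
    have hfun : (fun τ => v x τ) = fun τ => -u1 x τ - (u x τ)^2 / (2*ν) :=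
      funext fun τ => hv x τ
    rw [hfun]
    have h1 := ((hdt0 x hx τ hτ).pow 2).div_const (2*ν)
    have h2 := (hdt1 x hx τ hτ).neg.sub h1
    refine h2.congr_deriv ?_
    rw [hvtdef]
    field_simp
    ring
  have hD : ∀ s ∈ Ioo (0:ℝ) T, HasDerivAt F (∫ x in (0:ℝ)..L, vt x s * φ x) s := by
    intro s hs
    obtain ⟨ε, hε0, hεsub⟩ : ∃ ε > 0, Metric.ball s ε ⊆ Ioo 0 T :=
      Metric.isOpen_iff.mp isOpen_Ioo s hs
    have hFfun : F = fun τ => ∫ x in (0:ℝ)..L, v x τ * φ x := funext hF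
    rw [hFfun]
    refine (intervalIntegral.hasDerivAt_integral_of_dominated_loc_of_deriv_le (Metric.ball_mem_nhds s hε0)
      (F := fun τ x => v x τ * φ x) (F' := fun τ x => vt x τ * φ x)
      (bound := fun _ => Cvt * Cφ) ?_ ?_ ?_ ?_ ?_ ?_).2
    · filter_upwards [isOpen_Ioo.mem_nhds hs] with τ hτ
      rw [uIoc_of_le hL.le]
      exact (((hvcont τ ⟨hτ.1.le, hτ.2.le⟩).mul hφcont).mono Ioc_subset_Icc_self).aestronglyMeasurable
        measurableSet_Ioc
    · exact (((hvcont s ⟨hs.1.le, hs.2.le⟩).mul hφcont).mono (by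
        rw [uIcc_of_le hL.le])).intervalIntegrable
    · rw [uIoc_of_le hL.le]
      exact (((sliceX hvtc ⟨hs.1.le, hs.2.le⟩).mul hφcont).mono Ioc_subset_Icc_self).aestronglyMeasurable
        measurableSet_Ioc
    · refine Eventually.of_forall fun x hx => fun τ hτ => ?_
      rw [uIoc_of_le hL.le] at hx
      have hx' : x ∈ Icc (0:ℝ) L := Ioc_subset_Icc_self hx
      have hτ' := hεsub hτ
      rw [Real.norm_eq_abs, abs_mul]
      exact mul_le_mul (hCvt x hx' τ ⟨hτ'.1.le, hτ'.2.le⟩) (hCφ x hx') (abs_nonneg _) hCvt0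
    · exact intervalIntegrable_const
    · refine Eventually.of_forall fun x hx => fun τ hτ => ?_
      rw [uIoc_of_le hL.le] at hx
      have hx' : x ∈ Icc (0:ℝ) L := Ioc_subset_Icc_self hx
      have hτ' := hεsub hτ
      exact (hvtd x hx' τ ⟨hτ'.1.le, hτ'.2.le⟩).mul_const (φ x)

  -- Step E : Fubini representation of caputo F
  have hgc : ContinuousOn (fun p : ℝ × ℝ => vt p.2 p.1 * φ p.2) (Icc 0 T ×ˢ Icc 0 L) := by
    have h1 : ContinuousOn ((fun p : ℝ × ℝ => vt p.1 p.2) ∘ Prod.swap) (Icc 0 T ×ˢ Icc 0 L) :=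
      hvtc.comp (continuous_swap.continuousOn) (fun p hp => ⟨hp.2, hp.1⟩)
    have h2 : ContinuousOn (fun p : ℝ × ℝ => φ p.2) (Icc 0 T ×ˢ Icc 0 L) :=
      hφcont.comp continuous_snd.continuousOn (fun p hp => hp.2)
    exact h1.mul h2
  have hfub := fubini_helper ht0.le hL.le htT (le_refl L) hKint
    (g := fun s x => vt x s * φ x) hgc
  set G : ℝ → ℝ := fun x => ∫ s in (0:ℝ)..t, K s * vt x s with hGdef
  have hGmul : ∀ x : ℝ, (∫ s in (0:ℝ)..t, K s * (vt x s * φ x)) = G x * φ x := by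
    intro x
    rw [hGdef, ← intervalIntegral.integral_mul_const]
    exact intervalIntegral.integral_congr fun s _ => by ring
  have hcapF : caputo α F t = ∫ x in (0:ℝ)..L, (1/Γ) * (G x * φ x) := by
    have h1 : caputo α F t = (1/Γ) * ∫ s in (0:ℝ)..t, K s * deriv F s := rfl
    have h2 : (∫ s in (0:ℝ)..t, K s * deriv F s)
        = ∫ s in (0:ℝ)..t, ∫ x in (0:ℝ)..L, K s * (vt x s * φ x) := by
      refine intervalIntegral.integral_congr_ae ?_
      filter_upwards [htne] with s hst hs
      rw [uIoc_of_le ht0.le] at hs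
      have hsOoo : s ∈ Ioo (0:ℝ) T := ⟨hs.1, lt_of_lt_of_le (lt_of_le_of_ne hs.2 hst) htT⟩
      rw [(hD s hsOoo).deriv, intervalIntegral.integral_const_mul]
    rw [h1, h2, hfub.1, ← intervalIntegral.integral_const_mul]
    exact intervalIntegral.integral_congr fun x _ => by rw [hGmul x]
  have hGint : IntervalIntegrable (fun x => (1/Γ) * (G x * φ x)) volume 0 L := by
    have h := hfub.2
    have heq : (fun x => ∫ s in (0:ℝ)..t, K s * (vt x s * φ x)) = fun x => G x * φ x :=
      funext hGmul
    rw [heq] at h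
    exact h.const_mul _
  -- Step F : pointwise lower bound for G
  have hF_low : ∀ x ∈ Ioo (0:ℝ) L,
      ((v x t)^2 - (u x t)^4/(4*ν^2) - ν * u3 x t) * φ x ≤ (1/Γ) * (G x * φ x) := by
    intro x hx
    have hxIcc : x ∈ Icc (0:ℝ) L := ⟨hx.1.le, hx.2.le⟩
    have hi1 : IntervalIntegrable (fun s => K s * pdT u1 x s) volume 0 t :=
      hKii _ (sliceT hct1 hxIcc)
    have hi2 : IntervalIntegrable (fun s => K s * (u x s * pdT u x s)) volume 0 t :=
      hKii _ ((sliceT hcu0 hxIcc).mul (sliceT hct0 hxIcc))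
    have hsplit : G x = -(∫ s in (0:ℝ)..t, K s * pdT u1 x s)
        - (∫ s in (0:ℝ)..t, K s * (u x s * pdT u x s)) / ν := by
      have hGx : G x = ∫ s in (0:ℝ)..t, K s * vt x s := rfl
      have hcongr : G x = ∫ s in (0:ℝ)..t,
          (-(K s * pdT u1 x s) - (K s * (u x s * pdT u x s)) / ν) := by
        rw [hGx]
        refine intervalIntegral.integral_congr fun s _ => ?_
        rw [hvtdef]
        ring
      have e1 : (∫ s in (0:ℝ)..t, (-(K s * pdT u1 x s) - K s * (u x s * pdT u x s) / ν))
          = (∫ s in (0:ℝ)..t, -(K s * pdT u1 x s))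
            - ∫ s in (0:ℝ)..t, K s * (u x s * pdT u x s) / ν :=
        intervalIntegral.integral_sub hi1.neg (hi2.div_const ν)
      have e2 : (∫ s in (0:ℝ)..t, -(K s * pdT u1 x s))
          = -∫ s in (0:ℝ)..t, K s * pdT u1 x s := intervalIntegral.integral_neg
      have e3 : (∫ s in (0:ℝ)..t, K s * (u x s * pdT u x s) / ν)
          = (∫ s in (0:ℝ)..t, K s * (u x s * pdT u x s)) / ν :=
        intervalIntegral.integral_div ν _
      rw [hcongr, e1, e2, e3]
    have hBx := hB x hx
    have hCx := hC x hxIcc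
    have hcap0 : capT α u x t = (1/Γ) * ∫ s in (0:ℝ)..t, K s * pdT u x s := rfl
    have hpdex : (1/Γ) * (∫ s in (0:ℝ)..t, K s * pdT u x s)
        = ν * u2 x t - u x t * u1 x t := by
      rw [← hcap0]; exact hpde' x hx
    have hI2 : (1/Γ) * (∫ s in (0:ℝ)..t, K s * (u x s * pdT u x s))
        ≤ u x t * (ν * u2 x t - u x t * u1 x t) := by
      rw [← hpdex]
      calc (1/Γ) * (∫ s in (0:ℝ)..t, K s * (u x s * pdT u x s))
          ≤ (1/Γ) * (u x t * ∫ s in (0:ℝ)..t, K s * pdT u x s) :=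
            mul_le_mul_of_nonneg_left hCx (by positivity)
        _ = u x t * ((1/Γ) * ∫ s in (0:ℝ)..t, K s * pdT u x s) := by ring
    have hvx : v x t = -u1 x t - (u x t)^2/(2*ν) := hv x t
    have hkey : (v x t)^2 - (u x t)^4/(4*ν^2) - ν * u3 x t ≤ (1/Γ) * G x := by
      rw [hsplit]
      have hexpand : (1/Γ) * (-(∫ s in (0:ℝ)..t, K s * pdT u1 x s)
          - (∫ s in (0:ℝ)..t, K s * (u x s * pdT u x s)) / ν)
          = -((1/Γ) * (∫ s in (0:ℝ)..t, K s * pdT u1 x s))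
            - ((1/Γ) * (∫ s in (0:ℝ)..t, K s * (u x s * pdT u x s))) / ν := by ring
      rw [hexpand, hBx]
      have hdiv : ((1/Γ) * (∫ s in (0:ℝ)..t, K s * (u x s * pdT u x s))) / ν
          ≤ (u x t * (ν * u2 x t - u x t * u1 x t)) / ν :=
        (div_le_div_iff_of_pos_right hν).mpr hI2
      have hring : (v x t)^2 - (u x t)^4/(4*ν^2) - ν * u3 x t
          = -(ν * u3 x t - ((u1 x t)^2 + u x t * u2 x t))
            - (u x t * (ν * u2 x t - u x t * u1 x t)) / ν := by
        rw [hvx]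
        field_simp
        ring
      linarith [hdiv, hring.le, hring.ge]
    calc ((v x t)^2 - (u x t)^4/(4*ν^2) - ν * u3 x t) * φ x
        ≤ ((1/Γ) * G x) * φ x := mul_le_mul_of_nonneg_right hkey (hφ0 x hxIcc)
      _ = (1/Γ) * (G x * φ x) := by ring
  -- integrability of the various spatial integrands
  have hiA : IntervalIntegrable (fun x => (v x t)^2 * φ x) volume 0 L :=
    ((((hvcont t htIcc).pow 2).mul hφcont).mono (by
      rw [uIcc_of_le hL.le])).intervalIntegrable
  have hiB : IntervalIntegrable (fun x => ((u x t)^4/(4*ν^2)) * φ x) volume 0 L :=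
    (((((sliceX hcu0 htIcc).pow 4).div_const _).mul hφcont).mono (by
      rw [uIcc_of_le hL.le])).intervalIntegrable
  have hiC : IntervalIntegrable (fun x => u3 x t * φ x) volume 0 L :=
    (((sliceX hcu3 htIcc).mul hφcont).mono (by
      rw [uIcc_of_le hL.le])).intervalIntegrable
  have hiD : IntervalIntegrable (fun x => u x t * ψ3 x) volume 0 L :=
    (((sliceX hcu0 htIcc).mul hψ3c).mono (by
      rw [uIcc_of_le hL.le])).intervalIntegrable
  have hiE : IntervalIntegrable φ volume 0 L :=
    (hφcont.mono (by rw [uIcc_of_le hL.le])).intervalIntegrable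
  have hiF : IntervalIntegrable (fun x => |ψ3 x|) volume 0 L :=
    ((hψ3c.abs).mono (by rw [uIcc_of_le hL.le])).intervalIntegrable
  have hiG : IntervalIntegrable (fun x => v x t * φ x) volume 0 L :=
    (((hvcont t htIcc).mul hφcont).mono (by rw [uIcc_of_le hL.le])).intervalIntegrable
  -- Step G : integrate the pointwise bound
  have hrr_int : IntervalIntegrable
      (fun x => ((v x t)^2 - (u x t)^4/(4*ν^2) - ν * u3 x t) * φ x) volume 0 L := by
    have heq : (fun x => ((v x t)^2 - (u x t)^4/(4*ν^2) - ν * u3 x t) * φ x)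
        = fun x => (v x t)^2 * φ x - ((u x t)^4/(4*ν^2)) * φ x - ν * (u3 x t * φ x) :=
      funext fun x => by ring
    rw [heq]
    exact (hiA.sub hiB).sub (hiC.const_mul ν)
  have hstep : (∫ x in (0:ℝ)..L, ((v x t)^2 - (u x t)^4/(4*ν^2) - ν * u3 x t) * φ x)
      ≤ ∫ x in (0:ℝ)..L, (1/Γ) * (G x * φ x) := by
    refine intervalIntegral.integral_mono_ae_restrict hL.le hrr_int hGint ?_
    filter_upwards [ae_Icc_mem_Ioo] with x hx
    exact hF_low x hx
  have hrr_split : (∫ x in (0:ℝ)..L, ((v x t)^2 - (u x t)^4/(4*ν^2) - ν * u3 x t) * φ x)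
      = (∫ x in (0:ℝ)..L, (v x t)^2 * φ x) - (∫ x in (0:ℝ)..L, ((u x t)^4/(4*ν^2)) * φ x)
        - ν * (∫ x in (0:ℝ)..L, u3 x t * φ x) := by
    rw [← intervalIntegral.integral_const_mul, ← intervalIntegral.integral_sub hiA hiB,
      ← intervalIntegral.integral_sub (hiA.sub hiB) (hiC.const_mul ν)]
    exact intervalIntegral.integral_congr fun x _ => by ring
  -- Cauchy-Schwarz
  have hCS : θ₂⁻¹ * (F t)^2 ≤ ∫ x in (0:ℝ)..L, (v x t)^2 * φ x := by
    set c : ℝ := F t / θ₂ with hcdef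
    have h0 : 0 ≤ ∫ x in (0:ℝ)..L, ((v x t - c)^2 * φ x) :=
      intervalIntegral.integral_nonneg hL.le fun x hx => mul_nonneg (sq_nonneg _) (hφ0 x hx)
    have hexp : (∫ x in (0:ℝ)..L, ((v x t - c)^2 * φ x))
        = (∫ x in (0:ℝ)..L, (v x t)^2 * φ x) - (2*c) * (∫ x in (0:ℝ)..L, v x t * φ x)
          + c^2 * (∫ x in (0:ℝ)..L, φ x) := by
      rw [← intervalIntegral.integral_const_mul, ← intervalIntegral.integral_const_mul,
        ← intervalIntegral.integral_sub hiA (hiG.const_mul _),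
        ← intervalIntegral.integral_add ((hiA.sub (hiG.const_mul _))) (hiE.const_mul _)]
      exact intervalIntegral.integral_congr fun x _ => by ring
    have hFt : F t = ∫ x in (0:ℝ)..L, v x t * φ x := hF t
    have hc2 : θ₂⁻¹ * (F t)^2 = 2*c*(F t) - c^2*θ₂ := by
      rw [hcdef]
      field_simp
      ring
    rw [← hFt, ← hθ₂] at hexp
    linarith [h0, hexp, hc2]
  -- integration by parts
  have hibp : (∫ x in (0:ℝ)..L, (u3 x t * φ x + u x t * ψ3 x))
      = (u2 L t * φ L - u1 L t * ψ1 L + u L t * ψ2 L)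
        - (u2 0 t * φ 0 - u1 0 t * ψ1 0 + u 0 t * ψ2 0) := by
    refine intervalIntegral.integral_eq_sub_of_hasDerivAt
      (f := fun y => u2 y t * φ y - u1 y t * ψ1 y + u y t * ψ2 y) (fun y hy => ?_) ?_
    · rw [uIcc_of_le hL.le] at hy
      have h := (((hdx2 y hy t htIcc).mul (hφd0 y hy)).sub
        ((hdx1 y hy t htIcc).mul (hφd1 y hy))).add ((hdx0 y hy t htIcc).mul (hφd2 y hy))
      refine h.congr_deriv ?_
      ring
    · refine ContinuousOn.intervalIntegrable ?_
      rw [uIcc_of_le hL.le]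
      exact ((sliceX hcu3 htIcc).mul hφcont).add ((sliceX hcu0 htIcc).mul hψ3c)
  have hibp' : (∫ x in (0:ℝ)..L, u3 x t * φ x) + (∫ x in (0:ℝ)..L, u x t * ψ3 x)
      = (u2 L t * φ L - u1 L t * ψ1 L + u L t * ψ2 L)
        - (u2 0 t * φ 0 - u1 0 t * ψ1 0 + u 0 t * ψ2 0) := by
    rw [← intervalIntegral.integral_add hiC hiD]
    exact hibp
  have hΦt := hΦ t
  have h6 : ν * ((u2 L t * φ L - u1 L t * ψ1 L + u L t * ψ2 L)
      - (u2 0 t * φ 0 - u1 0 t * ψ1 0 + u 0 t * ψ2 0)) = -Φ t := by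
    rw [hΦt]; ring
  have h5 : ν * (∫ x in (0:ℝ)..L, u3 x t * φ x)
      = -Φ t - ν * (∫ x in (0:ℝ)..L, u x t * ψ3 x) := by
    rw [← h6, ← hibp']
    ring
  -- bounds
  have hbd1 : (∫ x in (0:ℝ)..L, ((u x t)^4/(4*ν^2)) * φ x)
      ≤ M^4/(4*ν^2) * ∫ x in (0:ℝ)..L, φ x := by
    rw [← intervalIntegral.integral_const_mul]
    refine intervalIntegral.integral_mono_on hL.le hiB (hiE.const_mul _) fun x hx => ?_
    have hb := hbound x hx t htIcc
    have h2 : (u x t)^2 ≤ M^2 := by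
      nlinarith [abs_nonneg (u x t), le_abs_self (u x t), neg_abs_le (u x t)]
    have h4 : (u x t)^4 ≤ M^4 := by nlinarith [sq_nonneg (u x t)]
    have hdd : (u x t)^4/(4*ν^2) ≤ M^4/(4*ν^2) :=
      (div_le_div_iff_of_pos_right (by positivity)).mpr h4
    exact mul_le_mul_of_nonneg_right hdd (hφ0 x hx)
  have hbd2 : -(M * ν * ∫ x in (0:ℝ)..L, |ψ3 x|) ≤ ν * ∫ x in (0:ℝ)..L, u x t * ψ3 x := by
    have h1 : (∫ x in (0:ℝ)..L, (-M) * |ψ3 x|) ≤ ∫ x in (0:ℝ)..L, u x t * ψ3 x := by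
      refine intervalIntegral.integral_mono_on hL.le (hiF.const_mul _) hiD fun x hx => ?_
      have hb := hbound x hx t htIcc
      have habs : |u x t * ψ3 x| ≤ M * |ψ3 x| := by
        rw [abs_mul]
        exact mul_le_mul_of_nonneg_right hb (abs_nonneg _)
      have hneg := neg_abs_le (u x t * ψ3 x)
      linarith
    rw [intervalIntegral.integral_const_mul] at h1
    nlinarith [h1]
  -- final assembly
  rw [hcapF]
  linarith [hstep, hrr_split, hCS, hbd1, hbd2, h5, hθ₁]
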